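/- Let $e_1, \dots, e_m \ge 0$, $\alpha \in (0,1)$, and let $\mathcal{R}$ be the e-BH rejection set at level $\alpha$ with $k^* = |\mathcal{R}|$. Then for every $j \in \mathcal{R}$, $e_j \ge \frac{m}{\alpha |\mathcal{R}|}$, and therefore $\frac{\#(\mathcal{H}_0 \cap \mathcal{R})}{\max(|\mathcal{R}|,1)} \le \frac{\alpha}{m} \sum_{j \in \mathcal{H}_0} e_j$ holds pointwise for any subset $\mathcal{H}_0 \subseteq \{1,\dots,m\}$. -/

import Mathlib

open MeasureTheory Finset
open scoped Classical

/-- The largest `k ∈ {0, …, m}` such that at least `k` of the e-values exceed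
`m / (α k)` (the condition holds vacuously for `k = 0`). -/
noncomputable def ebhK (m : ℕ) (α : ℝ) (e : Fin m → ℝ) : ℕ :=
  sSup {k | k ≤ m ∧ k ≤ (Finset.univ.filter (fun j => (m : ℝ) / (α * k) ≤ e j)).card}

/-- The e-BH rejection set at level `α`: `{j : e_j ≥ m / (α k*)}`, empty if `k* = 0`. -/
noncomputable def ebhR (m : ℕ) (α : ℝ) (e : Fin m → ℝ) : Finset (Fin m) :=
  if ebhK m α e = 0 then ∅
  else Finset.univ.filter (fun j => (m : ℝ) / (α * (ebhK m α e : ℝ)) ≤ e j)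

/-- every e-BH rejection clears the threshold `m/(α|R|)`, and the
false discovery proportion is pointwise bounded by `(α/m) ∑_{j ∈ H0} e_j`. -/
theorem stmt15 (m : ℕ) (α : ℝ) (hα : 0 < α) (hα1 : α < 1)
    (e : Fin m → ℝ) (he : ∀ j, 0 ≤ e j) (H0 : Finset (Fin m)) :
    (∀ j ∈ ebhR m α e, (m : ℝ) / (α * ((ebhR m α e).card : ℝ)) ≤ e j) ∧
    ((H0 ∩ ebhR m α e).card : ℝ) / max ((ebhR m α e).card : ℝ) 1
      ≤ α / m * ∑ j ∈ H0, e j := by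
  have hsum : 0 ≤ ∑ j ∈ H0, e j := Finset.sum_nonneg fun j _ => he j
  by_cases hk0 : ebhK m α e = 0
  · have hR : ebhR m α e = ∅ := by simp [ebhR, hk0]
    refine ⟨fun j hj => by simp [hR] at hj, ?_⟩
    simp only [hR, Finset.inter_empty, Finset.card_empty, Nat.cast_zero, zero_div]
    positivity
  · -- k* ∈ the set
    have hmem : ebhK m α e ∈ {k | k ≤ m ∧
        k ≤ (Finset.univ.filter (fun j => (m : ℝ) / (α * k) ≤ e j)).card} := by
      apply Nat.sSup_mem
      · exact ⟨0, by simp⟩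
      · exact ⟨m, fun k hk => hk.1⟩
    set k := ebhK m α e with hkdef
    have hkpos : 0 < k := Nat.pos_of_ne_zero hk0
    have hR : ebhR m α e =
        Finset.univ.filter (fun j => (m : ℝ) / (α * (k : ℝ)) ≤ e j) := by
      unfold ebhR; exact if_neg hk0
    have hcard : k ≤ (ebhR m α e).card := by rw [hR]; exact hmem.2
    have hcpos : 0 < ((ebhR m α e).card : ℝ) := by
      exact_mod_cast lt_of_lt_of_le hkpos hcard
    have hmpos : 0 < m := by
      have : 0 < (ebhR m α e).card := lt_of_lt_of_le hkpos hcard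
      obtain ⟨j, _⟩ := Finset.card_pos.mp this
      exact Fin.pos j
    have hthr : ∀ j ∈ ebhR m α e, (m : ℝ) / (α * ((ebhR m α e).card : ℝ)) ≤ e j := by
      intro j hj
      have hje : (m : ℝ) / (α * (k : ℝ)) ≤ e j := by
        rw [hR] at hj; exact (Finset.mem_filter.mp hj).2
      refine le_trans ?_ hje
      apply div_le_div_of_nonneg_left (by positivity)
      · positivity
      · have : (k : ℝ) ≤ ((ebhR m α e).card : ℝ) := by exact_mod_cast hcard
        nlinarith
    refine ⟨hthr, ?_⟩
    have hmax : max ((ebhR m α e).card : ℝ) 1 = ((ebhR m α e).card : ℝ) :=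
      max_eq_left (by exact_mod_cast lt_of_lt_of_le hkpos hcard)
    rw [hmax]
    set c := ((ebhR m α e).card : ℝ)
    set n := ((H0 ∩ ebhR m α e).card : ℝ) with hndef
    have hsum2 : n * ((m : ℝ) / (α * c)) ≤ ∑ j ∈ H0, e j := by
      have h1 : ∑ j ∈ H0 ∩ ebhR m α e, ((m : ℝ) / (α * c)) ≤
          ∑ j ∈ H0 ∩ ebhR m α e, e j := by
        apply Finset.sum_le_sum
        intro j hj
        exact hthr j (Finset.mem_of_mem_inter_right hj)
      have h2 : ∑ j ∈ H0 ∩ ebhR m α e, e j ≤ ∑ j ∈ H0, e j :=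
        Finset.sum_le_sum_of_subset_of_nonneg (Finset.inter_subset_left)
          (fun j _ _ => he j)
      rw [Finset.sum_const, nsmul_eq_mul] at h1
      exact le_trans h1 h2
    rw [div_le_iff₀ hcpos]
    have hm : (0 : ℝ) < m := by exact_mod_cast hmpos
    have : n * ((m : ℝ) / (α * c)) ≤ ∑ j ∈ H0, e j := hsum2
    rw [div_eq_mul_inv, mul_inv] at this
    calc n = α / m * (n * ((m : ℝ) / (α * c))) * c := by
            field_simp
          _ ≤ α / m * (∑ j ∈ H0, e j) * c := by
            apply mul_le_mul_of_nonneg_right _ (le_of_lt hcpos)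
            apply mul_le_mul_of_nonneg_left hsum2 (by positivity)
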